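/- Let n ≥ 1 and let X₁ and X₂ be countable, uniformly discrete subsets of ℝⁿ, and let r > 0. Then there exists a bijection b : X₁ → X₂ satisfying ‖b(x) − x‖ ≤ r for all x ∈ X₁ if and only if for every compact set U ⊆ ℝⁿ, the number of points of X₁ in the closed r-neighborhood U_r is at least the number of points of X₂ in U, and the number of points of X₂ in U_r is at least the number of points of X₁ in U. -/

import Mathlib

open Set Function Metric

/-- Pointwise Schröder–Bernstein: the bijection agrees pointwise with `f` or with `g⁻¹`. -/
lemma sb_pointwise {α β : Type*} {f : α → β} {g : β → α}
    (hf : Function.Injective f) (hg : Function.Injective g) :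
    ∃ h : α ≃ β, ∀ a, h a = f a ∨ g (h a) = a := by
  classical
  cases' isEmpty_or_nonempty β with hβ hβ
  · have hα : IsEmpty α := Function.isEmpty f
    exact ⟨(Equiv.equivEmpty α).trans (Equiv.equivEmpty β).symm, fun a => (hα.false a).elim⟩
  set F : Set α →o Set α :=
    { toFun := fun s => (g '' (f '' s)ᶜ)ᶜ
      monotone' := fun s t hst =>
        compl_subset_compl.mpr <| image_mono <| compl_subset_compl.mpr <| image_mono hst }
  set s : Set α := F.lfp
  have hs : (g '' (f '' s)ᶜ)ᶜ = s := F.map_lfp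
  have hns : g '' (f '' s)ᶜ = sᶜ := compl_injective (by simp [hs])
  set g' := invFun g
  have g'g : LeftInverse g' g := leftInverse_invFun hg
  have hg'ns : g' '' sᶜ = (f '' s)ᶜ := by rw [← hns, g'g.image_image]
  set h : α → β := s.piecewise f g'
  have hsurj : Surjective h := by rw [← range_eq_univ, range_piecewise, hg'ns, union_compl_self]
  have hinj : Injective h := by
    refine (injective_piecewise_iff _).2 ⟨hf.injOn, ?_, ?_⟩
    · intro x hx y hy hxy
      obtain ⟨x', _, rfl⟩ : x ∈ g '' (f '' s)ᶜ := by rwa [hns]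
      obtain ⟨y', _, rfl⟩ : y ∈ g '' (f '' s)ᶜ := by rwa [hns]
      rw [g'g _, g'g _] at hxy
      rw [hxy]
    · intro x hx y hy hxy
      obtain ⟨y', hy', rfl⟩ : y ∈ g '' (f '' s)ᶜ := by rwa [hns]
      rw [g'g _] at hxy
      exact hy' ⟨x, hx, hxy⟩
  refine ⟨Equiv.ofBijective h ⟨hinj, hsurj⟩, fun a => ?_⟩
  by_cases ha : a ∈ s
  · left
    exact Set.piecewise_eq_of_mem _ _ _ ha
  · right
    have : a ∈ g '' (f '' s)ᶜ := by rwa [hns]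
    obtain ⟨b, hb, rfl⟩ := this
    show g (h (g b)) = g b
    rw [show h (g b) = g' (g b) from Set.piecewise_eq_of_notMem _ _ _ ha, g'g b]

/-- A uniformly discrete set meets every compact set in a finite set. -/
lemma ud_finite_inter {E : Type*} [MetricSpace E] {X K : Set E} {δ : ℝ} (hδ : 0 < δ)
    (hsep : ∀ x ∈ X, ∀ y ∈ X, x ≠ y → δ ≤ dist x y) (hK : IsCompact K) :
    (X ∩ K).Finite := by
  by_contra hinf
  have hinf' : (X ∩ K).Infinite := hinf
  obtain ⟨x, hxK, hx⟩ := hinf'.exists_accPt_of_subset_isCompact hK Set.inter_subset_right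
  rw [accPt_iff_nhds] at hx
  obtain ⟨y, ⟨hy1, hy2⟩, hyx⟩ := hx (Metric.ball x (δ/2)) (Metric.ball_mem_nhds x (by linarith))
  obtain ⟨z, ⟨hz1, hz2⟩, hzx⟩ := hx (Metric.ball x (min (δ/2) (dist y x)))
      (Metric.ball_mem_nhds x (lt_min (by linarith) (dist_pos.mpr hyx)))
  rw [Metric.mem_ball] at hy1 hz1
  have hz1' : dist z x < dist y x := lt_of_lt_of_le hz1 (min_le_right _ _)
  have hzy : z ≠ y := fun hzy => by rw [hzy] at hz1'; exact lt_irrefl _ hz1'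
  have hsepyz := hsep y hy2.1 z hz2.1 (Ne.symm hzy)
  have ht : dist y z ≤ dist y x + dist x z := dist_triangle _ _ _
  rw [dist_comm x z] at ht
  have hz1'' : dist z x < δ/2 := lt_of_lt_of_le hz1 (min_le_left _ _)
  linarith

/-- Counting inequality from an injection moving points at most `r`. -/
lemma ud_count_le {E : Type*} [MetricSpace E] [ProperSpace E] {A B : Set E} {r : ℝ}
    (hAfin : ∀ K : Set E, IsCompact K → (A ∩ K).Finite)
    (f : ↥B → ↥A) (hfinj : Function.Injective f)
    (hfb : ∀ y : ↥B, dist ((f y : E)) (y : E) ≤ r)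
    {U : Set E} (hU : IsCompact U) :
    (B ∩ U).ncard ≤ (A ∩ Metric.cthickening r U).ncard := by
  classical
  have htgt : (A ∩ Metric.cthickening r U).Finite := hAfin _ hU.cthickening
  set F : E → E := fun y => if h : y ∈ B then (f ⟨y, h⟩ : E) else y with hF
  refine Set.ncard_le_ncard_of_injOn F ?_ ?_ htgt
  · rintro y ⟨hyB, hyU⟩
    simp only [hF, dif_pos hyB]
    exact ⟨(f ⟨y, hyB⟩).2, Metric.mem_cthickening_of_dist_le _ y r U hyU (hfb ⟨y, hyB⟩)⟩
  · rintro y ⟨hyB, _⟩ z ⟨hzB, _⟩ hyz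
    simp only [hF, dif_pos hyB, dif_pos hzB] at hyz
    exact Subtype.ext_iff.mp (hfinj (Subtype.ext hyz))

/-- Hall's theorem applied to the bounded-transport bipartite graph: an injection exists. -/
lemma ud_hall {E : Type*} [MetricSpace E] [ProperSpace E] {A B : Set E} {r : ℝ} (hr : 0 < r)
    (hBfin : ∀ K : Set E, IsCompact K → (B ∩ K).Finite)
    (hH : ∀ U : Set E, IsCompact U →
        (A ∩ U).ncard ≤ (B ∩ Metric.cthickening r U).ncard) :
    ∃ f : ↥A → ↥B, Function.Injective f ∧ ∀ x : ↥A, dist ((f x : E)) (x : E) ≤ r := by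
  classical
  have hnbfin : ∀ x : E, ({y : ↥B | dist (y : E) x ≤ r}).Finite := by
    intro x
    have h1 : (B ∩ Metric.closedBall x r).Finite := hBfin _ (isCompact_closedBall x r)
    have h2 : ((Subtype.val : ↥B → E) ⁻¹' (B ∩ Metric.closedBall x r)).Finite :=
      h1.preimage (Subtype.val_injective.injOn)
    convert h2 using 1
    ext y
    simp [Metric.mem_closedBall, y.2]
  set t : ↥A → Finset ↥B := fun x => (hnbfin (x : E)).toFinset with ht
  have hmem : ∀ (x : ↥A) (y : ↥B), y ∈ t x ↔ dist (y : E) (x : E) ≤ r := by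
    intro x y; simp [ht]
  have hallcond : ∀ s : Finset ↥A, s.card ≤ (s.biUnion t).card := by
    intro s
    set U : Set E := (Subtype.val : ↥A → E) '' (↑s : Set ↥A) with hU
    have hUfin : U.Finite := (s.finite_toSet).image _
    have hUcomp : IsCompact U := hUfin.isCompact
    have h1 := hH U hUcomp
    have hAU : A ∩ U = U := by
      apply Set.inter_eq_self_of_subset_right
      rintro _ ⟨y, _, rfl⟩; exact y.2
    have hcard1 : (A ∩ U).ncard = s.card := by
      rw [hAU, hU, Set.ncard_image_of_injective _ Subtype.val_injective,
        Set.ncard_coe_finset]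
    have hsub : B ∩ Metric.cthickening r U ⊆
        (Subtype.val : ↥B → E) '' (↑(s.biUnion t) : Set ↥B) := by
      rintro y ⟨hyB, hyC⟩
      have hUne : U.Nonempty := by
        rcases Set.eq_empty_or_nonempty U with h | h
        · rw [h, Metric.cthickening_empty] at hyC; exact absurd hyC (Set.notMem_empty y)
        · exact h
      obtain ⟨u, huU, hud⟩ := hUcomp.exists_infEdist_eq_edist hUne y
      rw [Metric.mem_cthickening_iff, hud] at hyC
      have hdle : dist y u ≤ r := (edist_le_ofReal hr.le).mp hyC
      obtain ⟨x, hxs, rfl⟩ := huU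
      refine ⟨⟨y, hyB⟩, ?_, rfl⟩
      rw [Finset.mem_coe, Finset.mem_biUnion]
      exact ⟨x, hxs, (hmem x ⟨y, hyB⟩).mpr hdle⟩
    have hcard2 : (B ∩ Metric.cthickening r U).ncard ≤ (s.biUnion t).card := by
      calc (B ∩ Metric.cthickening r U).ncard
          ≤ ((Subtype.val : ↥B → E) '' (↑(s.biUnion t) : Set ↥B)).ncard :=
            Set.ncard_le_ncard hsub (((s.biUnion t).finite_toSet).image _)
        _ = (s.biUnion t).card := by
            rw [Set.ncard_image_of_injective _ Subtype.val_injective,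
              Set.ncard_coe_finset]
    rw [← hcard1]; exact h1.trans hcard2
  obtain ⟨f, hfinj, hft⟩ := (Finset.all_card_le_biUnion_card_iff_exists_injective t).mp hallcond
  exact ⟨f, hfinj, fun x => (hmem x (f x)).mp (hft x)⟩



/-- **Hall Marriage Theorem for bounded transport** (Theorem 1.1 of the paper).
For countable, uniformly discrete sets `X₁, X₂ ⊆ ℝⁿ` and `r > 0`, there is a bijection
`b : X₁ → X₂` with `‖b x - x‖ ≤ r` iff for every compact `U`, the number of points of `X₁`
in the closed `r`-neighborhood of `U` is at least the number of points of `X₂` in `U`,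
and vice versa. -/
theorem hall_marriage_bounded_transport
    (n : ℕ) (hn : 1 ≤ n)
    (X₁ X₂ : Set (EuclideanSpace ℝ (Fin n)))
    (hX₁count : X₁.Countable) (hX₂count : X₂.Countable)
    (hX₁ud : ∃ δ > 0, ∀ x ∈ X₁, ∀ y ∈ X₁, x ≠ y → δ ≤ dist x y)
    (hX₂ud : ∃ δ > 0, ∀ x ∈ X₂, ∀ y ∈ X₂, x ≠ y → δ ≤ dist x y)
    (r : ℝ) (hr : 0 < r) :
    (∃ b : X₁ ≃ X₂, ∀ x : X₁,
        ‖(b x : EuclideanSpace ℝ (Fin n)) - (x : EuclideanSpace ℝ (Fin n))‖ ≤ r) ↔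
    (∀ U : Set (EuclideanSpace ℝ (Fin n)), IsCompact U →
        (X₂ ∩ U).ncard ≤ (X₁ ∩ Metric.cthickening r U).ncard ∧
        (X₁ ∩ U).ncard ≤ (X₂ ∩ Metric.cthickening r U).ncard) := by
  classical
  obtain ⟨δ₁, hδ₁, hsep₁⟩ := hX₁ud
  obtain ⟨δ₂, hδ₂, hsep₂⟩ := hX₂ud
  have hfin₁ : ∀ K : Set (EuclideanSpace ℝ (Fin n)), IsCompact K → (X₁ ∩ K).Finite :=
    fun K hK => ud_finite_inter hδ₁ hsep₁ hK
  have hfin₂ : ∀ K : Set (EuclideanSpace ℝ (Fin n)), IsCompact K → (X₂ ∩ K).Finite :=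
    fun K hK => ud_finite_inter hδ₂ hsep₂ hK
  constructor
  · rintro ⟨b, hb⟩ U hU
    have hb' : ∀ x : ↥X₁, dist ((b x : EuclideanSpace ℝ (Fin n))) (x : EuclideanSpace ℝ (Fin n)) ≤ r := by
      intro x; rw [dist_eq_norm]; exact hb x
    refine ⟨ud_count_le hfin₁ b.symm b.symm.injective (fun y => ?_) hU,
      ud_count_le hfin₂ b b.injective hb' hU⟩
    have := hb' (b.symm y)
    rw [b.apply_symm_apply] at this
    rw [dist_comm]; exact this
  · intro H
    obtain ⟨f, hfinj, hfb⟩ := ud_hall hr hfin₂ (fun U hU => (H U hU).2)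
    obtain ⟨g, hginj, hgb⟩ := ud_hall hr hfin₁ (fun U hU => (H U hU).1)
    obtain ⟨b, hb⟩ := sb_pointwise hfinj hginj
    refine ⟨b, fun x => ?_⟩
    rw [← dist_eq_norm]
    rcases hb x with h | h
    · rw [h]; exact hfb x
    · calc dist ((b x : ↥X₂) : EuclideanSpace ℝ (Fin n)) (x : EuclideanSpace ℝ (Fin n))
          = dist ((g (b x) : EuclideanSpace ℝ (Fin n))) ((b x : ↥X₂) : EuclideanSpace ℝ (Fin n)) := by
            rw [h, dist_comm]
        _ ≤ r := hgb (b x)
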